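/- Model Minkowski spacetime as ℝ⁴ with quadratic form Q(v) = −v₀² + v₁² + v₂² + v₃². Let R₀ > 0 and ω ∈ ℝ with ω²R₀² < 1, set a = √(1 − ω²R₀²), and consider the clocks γ(t) = (t, 0, 0, 0) and γ̃(t̃) = (a·t̃, R₀·cos(ω t̃), R₀·sin(ω t̃), 0). Then for every t ∈ ℝ, the set {t̃ ∈ ℝ : Q(γ̃(t̃) − γ(t)) = 0} equals {(t − R₀)/a, (t + R₀)/a}. Consequently, the radar method carried through with respect to γ̃ assigns to the event γ(t) the radar time T̃(t) = t/√(1 − ω²R₀²) and the radar distance R̃(t) = R₀/√(1 − ω²R₀²); in particular neither clock is Einstein synchroneous to the other, and they assign to each other constant but different radar distances. -/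

import Mathlib

/-- The Minkowski quadratic form on `ℝ⁴`. -/
noncomputable def minkQ (v : Fin 4 → ℝ) : ℝ :=
  -(v 0) ^ 2 + (v 1) ^ 2 + (v 2) ^ 2 + (v 3) ^ 2

/-- Section 5 example of the paper, radar method carried through with respect to the
circling clock `γ̃(t̃) = (a t̃, R₀ cos ω t̃, R₀ sin ω t̃, 0)`, `a = √(1-ω²R₀²)`: the
two light rays through the event `γ(t) = (t,0,0,0)` meet `γ̃` at parameters
`(t ∓ R₀)/a`; hence `γ̃` assigns to `γ(t)` radar time `T̃(t) = t/√(1-ω²R₀²)` and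
radar distance `R̃(t) = R₀/√(1-ω²R₀²)`; in particular neither clock is Einstein
synchroneous to the other and they assign to each other constant but different
distances. -/
theorem radar_of_rest_clock_wrt_circling_clock
    (R₀ ω : ℝ) (hR₀ : R₀ > 0) (hω : ω ^ 2 * R₀ ^ 2 < 1) (hω0 : ω ≠ 0)
    (a : ℝ) (ha : a = Real.sqrt (1 - ω ^ 2 * R₀ ^ 2))
    (γ γt : ℝ → Fin 4 → ℝ)
    (hγ : ∀ t : ℝ, γ t = ![t, 0, 0, 0])
    (hγt : ∀ tt : ℝ, γt tt = ![a * tt, R₀ * Real.cos (ω * tt), R₀ * Real.sin (ω * tt), 0]) :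
    (∀ t : ℝ,
      {tt : ℝ | minkQ (γt tt - γ t) = 0} = {(t - R₀) / a, (t + R₀) / a} ∧
      ((t - R₀) / a + (t + R₀) / a) / 2 = t / Real.sqrt (1 - ω ^ 2 * R₀ ^ 2) ∧
      ((t + R₀) / a - (t - R₀) / a) / 2 = R₀ / Real.sqrt (1 - ω ^ 2 * R₀ ^ 2)) ∧
    -- γ is not Einstein synchroneous to γ̃ …
    (∃ t : ℝ, ((t - R₀) / a + (t + R₀) / a) / 2 ≠ t) ∧
    -- … and γ̃ is not Einstein synchroneous to γ …
    (∃ tt : ℝ, ((a * tt - R₀) + (a * tt + R₀)) / 2 ≠ tt) ∧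
    -- … and the two constant radar distances differ.
    R₀ / Real.sqrt (1 - ω ^ 2 * R₀ ^ 2) ≠ R₀ := by
  have h1 : (0:ℝ) < 1 - ω ^ 2 * R₀ ^ 2 := by nlinarith
  have ha0 : 0 < a := ha ▸ Real.sqrt_pos.mpr h1
  have ha2 : a ^ 2 = 1 - ω ^ 2 * R₀ ^ 2 := by
    rw [ha, Real.sq_sqrt h1.le]
  have ha1 : a < 1 := by nlinarith [sq_nonneg ω, sq_nonneg R₀, mul_pos (mul_pos (mul_self_pos.mpr hω0) hR₀) hR₀]
  refine ⟨fun t => ⟨?_, ?_, ?_⟩, ⟨1, ?_⟩, ⟨1, ?_⟩, ?_⟩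
  · ext tt
    simp only [Set.mem_setOf_eq, Set.mem_insert_iff, Set.mem_singleton_iff,
      hγ, hγt, minkQ]
    have hpyth : (R₀ * Real.cos (ω * tt)) ^ 2 + (R₀ * Real.sin (ω * tt)) ^ 2 = R₀ ^ 2 := by
      have := Real.sin_sq_add_cos_sq (ω * tt)
      nlinarith
    constructor
    · intro h
      simp only [Pi.sub_apply, Matrix.cons_val_zero, Matrix.cons_val_one, Matrix.head_cons,
        Matrix.cons_val_two, Matrix.tail_cons, Matrix.cons_val_three] at h
      have h2 : (a * tt - t) ^ 2 = R₀ ^ 2 := by nlinarith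
      rcases sq_eq_sq_iff_eq_or_eq_neg.mp h2 with h3 | h3
      · right; field_simp; linarith
      · left; field_simp; linarith
    · intro h
      simp only [Pi.sub_apply, Matrix.cons_val_zero, Matrix.cons_val_one, Matrix.head_cons,
        Matrix.cons_val_two, Matrix.tail_cons, Matrix.cons_val_three]
      rcases h with h | h
      · have : a * tt = t - R₀ := by rw [h]; field_simp
        nlinarith
      · have : a * tt = t + R₀ := by rw [h]; field_simp
        nlinarith
  · rw [← ha]; field_simp; ring
  · rw [← ha]; field_simp; ring
  · rw [← add_div]
    intro h
    have : (1 - 1 + (1 + 1)) / a = 1 * 2 := by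
      field_simp at h ⊢; linarith
    have : a = 1 := by field_simp at this; linarith
    linarith
  · intro h
    have : a = 1 := by nlinarith
    linarith
  · rw [← ha]
    intro h
    rw [div_eq_iff ha0.ne'] at h
    nlinarith
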